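/- Let T be a tree and I an independent set of T containing some vertex of Core(T). Then I is not a maximum independent set of T. -/

import Mathlib

open SimpleGraph Matrix

attribute [local instance] Classical.propDecidable

noncomputable section

variable {V : Type*}

/-- A graph is singular if its adjacency matrix (over ℝ) has nontrivial kernel. -/
def IsSingular [Fintype V] (G : SimpleGraph V) : Prop :=
  ∃ x : V → ℝ, x ≠ 0 ∧ G.adjMatrix ℝ *ᵥ x = 0

/-- The support of the null space of the adjacency matrix. -/
def nullSupp [Fintype V] (G : SimpleGraph V) : Set V :=
  {v | ∃ x : V → ℝ, G.adjMatrix ℝ *ᵥ x = 0 ∧ x v ≠ 0}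

/-- The core: all neighbours of supported vertices. -/
def core [Fintype V] (G : SimpleGraph V) : Set V :=
  ⋃ v ∈ nullSupp G, G.neighborSet v

/-- Vertex set of the N-forest: complement of the closed neighbourhood of the support. -/
def fnVerts [Fintype V] (G : SimpleGraph V) : Set V :=
  (nullSupp G ∪ core G)ᶜ

/-- A matching as a set of pairwise disjoint edges of `G`. -/
def IsMatchingSet (G : SimpleGraph V) (M : Set (Sym2 V)) : Prop :=
  M ⊆ G.edgeSet ∧ M.Pairwise fun e f => ∀ v : V, ¬(v ∈ e ∧ v ∈ f)

/-- `M` saturates `v`. -/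
def Saturates (M : Set (Sym2 V)) (v : V) : Prop := ∃ e ∈ M, v ∈ e

/-- A perfect matching saturates every vertex. -/
def IsPerfectMatchingSet (G : SimpleGraph V) (M : Set (Sym2 V)) : Prop :=
  IsMatchingSet G M ∧ ∀ v : V, Saturates M v

/-- Matching number. -/
def matchNum [Fintype V] (G : SimpleGraph V) : ℕ :=
  sSup {n | ∃ M : Set (Sym2 V), IsMatchingSet G M ∧ M.ncard = n}

/-- Maximum matchings. -/
def IsMaxMatching [Fintype V] (G : SimpleGraph V) (M : Set (Sym2 V)) : Prop :=
  IsMatchingSet G M ∧ M.ncard = matchNum G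

/-- Independent set of vertices. -/
def IsIndepSet (G : SimpleGraph V) (I : Set V) : Prop :=
  I.Pairwise fun a b => ¬ G.Adj a b

/-- Independence number. -/
def indepNum [Fintype V] (G : SimpleGraph V) : ℕ :=
  sSup {n | ∃ I : Set V, _root_.IsIndepSet G I ∧ I.ncard = n}

/-- Maximum independent sets. -/
def IsMaxIndep [Fintype V] (G : SimpleGraph V) (I : Set V) : Prop :=
  _root_.IsIndepSet G I ∧ I.ncard = _root_.indepNum G

/-- The graph `G` with all vertices in `S` deleted (kept as isolated vertices). -/
def avoid (G : SimpleGraph V) (S : Set V) : SimpleGraph V where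
  Adj a b := G.Adj a b ∧ a ∉ S ∧ b ∉ S
  symm := ⟨fun a b h => ⟨h.1.symm, h.2.2, h.2.1⟩⟩
  loopless := ⟨fun a h => G.loopless.irrefl a h.1⟩

/-- `G` is unicyclic: connected with as many edges as vertices. -/
def IsUnicyclic [Fintype V] (G : SimpleGraph V) : Prop :=
  G.Connected ∧ G.edgeFinset.card = Fintype.card V

/-- `C` is the vertex set of the (unique) cycle of `G`:
the induced subgraph on `C` is connected and 2-regular. -/
def IsCycleVerts [Fintype V] (G : SimpleGraph V) (C : Set V) : Prop :=
  C.Nonempty ∧ (G.induce C).Connected ∧ ∀ v : C, (G.induce C).degree v = 2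

/-- Vertices of the pendant tree of `G` at the cycle vertex `v`: all vertices
reachable from `v` after deleting the other cycle vertices. -/
def pendantVerts (G : SimpleGraph V) (C : Set V) (v : V) : Set V :=
  {u | (avoid G (C \ {v})).Reachable v u}

lemma mem_pendantVerts_self (G : SimpleGraph V) (C : Set V) (v : V) :
    v ∈ pendantVerts G C v := Reachable.refl v

/-- The pendant tree of `G` at `v` (as an induced subgraph). -/
def pendantTree (G : SimpleGraph V) (C : Set V) (v : V) :
    SimpleGraph (pendantVerts G C v) := G.induce (pendantVerts G C v)

/-- The rest of the graph, `G − G{v}`. -/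
def pendantRest (G : SimpleGraph V) (C : Set V) (v : V) :
    SimpleGraph ((pendantVerts G C v)ᶜ : Set V) := G.induce (pendantVerts G C v)ᶜ

/-- `v` is matched in a graph `H`: every maximum matching of `H` saturates `v`. -/
def MatchedIn {W : Type*} [Fintype W] (H : SimpleGraph W) (w : W) : Prop :=
  ∀ M : Set (Sym2 W), IsMaxMatching H M → Saturates M w

/-- A unicyclic graph is of Type I if some cycle vertex is matched in its pendant tree. -/
def TypeI [Fintype V] (G : SimpleGraph V) (C : Set V) : Prop :=
  ∃ v ∈ C, MatchedIn (pendantTree G C v) ⟨v, mem_pendantVerts_self G C v⟩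

/-- Type II: every cycle vertex is missed by some maximum matching of its pendant tree. -/
def TypeII [Fintype V] (G : SimpleGraph V) (C : Set V) : Prop :=
  ∀ v ∈ C, ¬ MatchedIn (pendantTree G C v) ⟨v, mem_pendantVerts_self G C v⟩

end

lemma avoid_adj_iff {V : Type*} {G : SimpleGraph V} {S : Set V} {a b : V} :
    (avoid G S).Adj a b ↔ G.Adj a b ∧ a ∉ S ∧ b ∉ S := Iff.rfl


lemma avoid_le {V : Type*} (G : SimpleGraph V) (S : Set V) : avoid G S ≤ G :=
  fun _ _ h => (avoid_adj_iff.1 h).1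

lemma isAcyclic_mono {V : Type*} {G H : SimpleGraph V} (hle : H ≤ G) (hg : G.IsAcyclic) :
    H.IsAcyclic := fun _ c hc => hg (c.mapLe hle) ((Walk.mapLe_isCycle hle).2 hc)

lemma my_exists_leaf {V : Type*} [Fintype V] {H : SimpleGraph V} (hac : H.IsAcyclic)
    {a b : V} (hab : H.Adj a b) :
    ∃ ℓ p : V, H.Adj ℓ p ∧ ∀ w, H.Adj ℓ w → w = p := by
  classical
  set L : Set ℕ := {n | ∃ (u v : V) (w : H.Walk u v), w.IsPath ∧ w.length = n} with hL
  have h1 : (1 : ℕ) ∈ L := by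
    refine ⟨a, b, Walk.cons hab Walk.nil, ?_, rfl⟩
    simp [Walk.cons_isPath_iff, hab.ne]
  have hbdd : BddAbove L := by
    refine ⟨Fintype.card V, fun n hn => ?_⟩
    obtain ⟨u, v, w, hw, rfl⟩ := hn
    exact hw.length_lt.le
  have hmem := Nat.sSup_mem ⟨1, h1⟩ hbdd
  obtain ⟨u, v, w, hw, hlen⟩ := hmem
  have hpos : 1 ≤ sSup L := le_csSup hbdd h1
  cases w with
  | nil => simp at hlen; omega
  | cons h q =>
    rename_i u'
    refine ⟨u, u', h, fun w' hw' => ?_⟩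
    by_contra hne
    by_cases hsup : w' ∈ (Walk.cons h q).support
    · have hP1 : (Walk.cons hw' Walk.nil).IsPath := by
        simp [Walk.cons_isPath_iff, hw'.ne]
      have hP2 : ((Walk.cons h q).takeUntil w' hsup).IsPath := hw.takeUntil hsup
      have := hac.path_unique ⟨Walk.cons hw' Walk.nil, hP1⟩ ⟨(Walk.cons h q).takeUntil w' hsup, hP2⟩
      have heq : (Walk.cons hw' Walk.nil) = (Walk.cons h q).takeUntil w' hsup :=
        congrArg Subtype.val this
      have hspec := (Walk.cons h q).take_spec hsup
      rw [← heq] at hspec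
      have := congrArg (fun z => z.getVert 1) hspec
      simp [Walk.getVert_cons_succ, Walk.getVert_zero] at this
      exact hne this
    · have hP : (Walk.cons (hw'.symm) (Walk.cons h q)).IsPath := by
        rw [Walk.cons_isPath_iff]; exact ⟨hw, hsup⟩
      have : (Walk.cons (hw'.symm) (Walk.cons h q)).length ∈ L :=
        ⟨w', v, _, hP, rfl⟩
      have hle := le_csSup hbdd this
      simp only [Walk.length_cons] at hle hlen
      omega

lemma avoid_null {V : Type*} [Fintype V] (H : SimpleGraph V) (R : Set V) (x x' : V → ℝ)
    (hx : H.adjMatrix ℝ *ᵥ x = 0)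
    (hagree : ∀ u, u ∉ R → x' u = x u)
    (hRx : ∀ u, u ∉ R → ∀ w ∈ R, H.Adj u w → x w = 0) :
    (avoid H R).adjMatrix ℝ *ᵥ x' = 0 := by
  funext u
  rw [adjMatrix_mulVec_apply]
  by_cases hu : u ∈ R
  · have : (avoid H R).neighborFinset u = ∅ := by
      apply Finset.eq_empty_of_forall_notMem
      intro w hw
      rw [mem_neighborFinset, avoid_adj_iff] at hw
      exact hw.2.1 hu
    simp [this]
  · have h0 : ∑ w ∈ H.neighborFinset u, x w = 0 := by
      rw [← adjMatrix_mulVec_apply, hx]; rfl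
    calc ∑ w ∈ (avoid H R).neighborFinset u, x' w
        = ∑ w ∈ (avoid H R).neighborFinset u, x w := by
          apply Finset.sum_congr rfl
          intro w hw
          rw [mem_neighborFinset, avoid_adj_iff] at hw
          exact hagree w hw.2.2
      _ = ∑ w ∈ H.neighborFinset u, x w := by
          apply Finset.sum_subset
          · intro w hw
            rw [mem_neighborFinset] at hw ⊢; rw [avoid_adj_iff] at hw
            exact hw.1
          · intro w hw hnw
            rw [mem_neighborFinset] at hw hnw
            have hwR : w ∈ R := by
              by_contra hwR
              exact hnw (avoid_adj_iff.2 ⟨hw, hu, hwR⟩)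
            exact hRx u hu w hwR hw
      _ = 0 := h0

lemma crux_noedge {V : Type*} [Fintype V] (H : SimpleGraph V) (hE : H.edgeSet = ∅)
    (x : V → ℝ) :
    (∀ a b, H.Adj a b → x a = 0 ∨ x b = 0) ∧
    ∀ I : Set V, _root_.IsIndepSet H I →
      (∀ u ∈ I, x u ≠ 0 ∨ ∃ w, H.Adj u w ∧ x w ≠ 0) →
      I.ncard ≤ {u | x u ≠ 0}.ncard ∧
      ((∃ u ∈ I, x u = 0) → I.ncard < {u | x u ≠ 0}.ncard) := by
  have hno : ∀ a b, ¬ H.Adj a b := by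
    intro a b hab
    have : s(a, b) ∈ H.edgeSet := H.mem_edgeSet.2 hab
    rw [hE] at this
    exact this
  refine ⟨fun a b hab => absurd hab (hno a b), fun I hind hcov => ?_⟩
  have hsub : I ⊆ {u | x u ≠ 0} := by
    intro u hu
    rcases hcov u hu with h | ⟨w, hadj, _⟩
    · exact h
    · exact absurd hadj (hno u w)
  refine ⟨Set.ncard_le_ncard hsub (Set.toFinite _), ?_⟩
  rintro ⟨u, huI, hux⟩
  exact absurd hux (hsub huI)

lemma crux {V : Type*} [Fintype V] (n : ℕ) :
    ∀ (H : SimpleGraph V), H.edgeSet.ncard ≤ n → H.IsAcyclic →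
    ∀ x : V → ℝ, H.adjMatrix ℝ *ᵥ x = 0 →
    (∀ a b, H.Adj a b → x a = 0 ∨ x b = 0) ∧
    ∀ I : Set V, _root_.IsIndepSet H I →
      (∀ u ∈ I, x u ≠ 0 ∨ ∃ w, H.Adj u w ∧ x w ≠ 0) →
      I.ncard ≤ {u | x u ≠ 0}.ncard ∧
      ((∃ u ∈ I, x u = 0) → I.ncard < {u | x u ≠ 0}.ncard) := by
  induction n with
  | zero =>
    intro H hcard hac x hx
    have hE : H.edgeSet = ∅ := (Set.ncard_eq_zero (Set.toFinite _)).1 (Nat.le_zero.1 hcard)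
    exact crux_noedge H hE x
  | succ n IH =>
    intro H hcard hac x hx
    by_cases hE : H.edgeSet = ∅
    · exact crux_noedge H hE x
    · obtain ⟨a, b, hab⟩ : ∃ a b, H.Adj a b := by
        obtain ⟨e, he⟩ := Set.nonempty_iff_ne_empty.2 hE
        induction e using Sym2.ind with
        | _ a b => exact ⟨a, b, H.mem_edgeSet.1 he⟩
      obtain ⟨ℓ, p, hlp, huniq⟩ := my_exists_leaf hac hab
      have hsum : ∀ u : V, ∑ w ∈ H.neighborFinset u, x w = 0 := fun u => by
        rw [← adjMatrix_mulVec_apply, hx]; rfl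
      have hxp : x p = 0 := by
        have hs := hsum ℓ
        rwa [Finset.sum_eq_single_of_mem p (by rwa [mem_neighborFinset])
          (fun c hc hcp => absurd (huniq c ((H.mem_neighborFinset _ _).1 hc)) hcp)] at hs
      by_cases hxl : x ℓ = 0
      · -- B1 : delete the leaf ℓ
        set H' := avoid H ({ℓ} : Set V) with hH'
        have hle : H' ≤ H := avoid_le _ _
        have hcard' : H'.edgeSet.ncard ≤ n := by
          have hss : H'.edgeSet ⊂ H.edgeSet := by
            refine ⟨edgeSet_mono hle, fun hsub => ?_⟩
            have h2 := hsub (H.mem_edgeSet.2 hlp)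
            rw [mem_edgeSet] at h2
            exact (avoid_adj_iff.1 h2).2.1 rfl
          have := Set.ncard_lt_ncard hss (Set.toFinite _)
          omega
        have hx' : H'.adjMatrix ℝ *ᵥ x = 0 := by
          apply avoid_null H _ x x hx (fun _ _ => rfl)
          rintro u hu w hw hadj
          rw [Set.mem_singleton_iff] at hw
          subst hw; exact hxl
        obtain ⟨hS', hI'⟩ := IH H' hcard' (isAcyclic_mono hle hac) x hx'
        constructor
        · intro c d hadj
          by_cases hc : c = ℓ
          · left; rw [hc]; exact hxl
          by_cases hd : d = ℓ
          · right; rw [hd]; exact hxl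
          exact hS' c d (avoid_adj_iff.2 ⟨hadj, hc, hd⟩)
        · intro I hind hcov
          apply hI' I
          · exact fun u hu v hv hne hadj => hind hu hv hne (avoid_adj_iff.1 hadj).1
          · intro u hu
            rcases hcov u hu with h | ⟨w, hadj, hxw⟩
            · exact Or.inl h
            · right
              have hwl : w ≠ ℓ := fun h => hxw (h ▸ hxl)
              have hul : u ≠ ℓ := by
                rintro rfl
                rw [huniq w hadj] at hxw; exact hxw hxp
              exact ⟨w, avoid_adj_iff.2 ⟨hadj, hul, hwl⟩, hxw⟩
      · -- B2 : delete leaf ℓ (with x ℓ ≠ 0) and its neighbour p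
        have hlp_ne : ℓ ≠ p := hlp.ne
        set x' : V → ℝ := fun u => if u = ℓ then 0 else x u with hx'def
        set H' := avoid H ({ℓ, p} : Set V) with hH'
        have hle : H' ≤ H := avoid_le _ _
        have hcard' : H'.edgeSet.ncard ≤ n := by
          have hss : H'.edgeSet ⊂ H.edgeSet := by
            refine ⟨edgeSet_mono hle, fun hsub => ?_⟩
            have h2 := hsub (H.mem_edgeSet.2 hlp)
            rw [mem_edgeSet] at h2
            exact (avoid_adj_iff.1 h2).2.1 (by simp)
          have := Set.ncard_lt_ncard hss (Set.toFinite _)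
          omega
        have hx'null : H'.adjMatrix ℝ *ᵥ x' = 0 := by
          apply avoid_null H _ x x' hx
          · intro u hu
            have hul : u ≠ ℓ := fun h => hu (by simp [h])
            simp [hx'def, hul]
          · rintro u hu w hw hadj
            simp only [Set.mem_insert_iff, Set.mem_singleton_iff] at hw
            rcases hw with hw | hw
            · rw [hw] at hadj
              exact absurd (by simp [huniq u hadj.symm] : u ∈ ({ℓ, p} : Set V)) hu
            · rw [hw]; exact hxp
        obtain ⟨hS', hI'⟩ := IH H' hcard' (isAcyclic_mono hle hac) x' hx'null
        have hSeq : {u | x' u ≠ 0} = {u | x u ≠ 0} \ {ℓ} := by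
          ext u
          by_cases h : u = ℓ <;> simp [hx'def, h, hxl]
        have hcards : {u | x' u ≠ 0}.ncard + 1 = {u | x u ≠ 0}.ncard := by
          rw [hSeq]
          exact Set.ncard_diff_singleton_add_one hxl (Set.toFinite _)
        obtain ⟨q, hq_adj, hq_ne, hq_x⟩ : ∃ q, H.Adj p q ∧ q ≠ ℓ ∧ x q ≠ 0 := by
          by_contra hcon
          push_neg at hcon
          have hs := hsum p
          rw [Finset.sum_eq_single_of_mem ℓ (by rw [mem_neighborFinset]; exact hlp.symm)
            (fun c hc hcne => hcon c ((H.mem_neighborFinset _ _).1 hc) hcne)] at hs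
          exact hxl hs
        constructor
        · intro c d hadj
          by_contra hcon
          push_neg at hcon
          obtain ⟨hc0, hd0⟩ := hcon
          have hcp : c ≠ p := fun h => hc0 (h ▸ hxp)
          have hdp : d ≠ p := fun h => hd0 (h ▸ hxp)
          have hcl : c ≠ ℓ := by rintro rfl; exact hdp (huniq d hadj)
          have hdl : d ≠ ℓ := by rintro rfl; exact hcp (huniq c hadj.symm)
          rcases hS' c d (avoid_adj_iff.2 ⟨hadj, by simp [hcl, hcp], by simp [hdl, hdp]⟩) with h | h
          · exact hc0 (by simpa [hx'def, hcl] using h)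
          · exact hd0 (by simpa [hx'def, hdl] using h)
        · intro I hind hcov
          set I' := I \ ({ℓ, p} : Set V) with hI'def
          have hindI' : _root_.IsIndepSet H' I' := fun u hu v hv hne hadj => hind hu.1 hv.1 hne (avoid_adj_iff.1 hadj).1
          have hcovI' : ∀ u ∈ I', x' u ≠ 0 ∨ ∃ w, H'.Adj u w ∧ x' w ≠ 0 := by
            intro u hu
            obtain ⟨huI, huR⟩ := hu
            rcases hcov u huI with h | ⟨w, hadj, hxw⟩
            · left
              have hul : u ≠ ℓ := fun he => huR (by simp [he])
              simpa [hx'def, hul]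
            · right
              have hwp : w ≠ p := fun he => hxw (he ▸ hxp)
              have hwl : w ≠ ℓ := by
                intro hwe
                rw [hwe] at hadj
                exact huR (by simp [huniq u hadj.symm])
              exact ⟨w, avoid_adj_iff.2 ⟨hadj, huR, by simp [hwl, hwp]⟩, by simpa [hx'def, hwl]⟩
          obtain ⟨hle', hlt'⟩ := hI' I' hindI' hcovI'
          have hIsplit : (I ∩ ({ℓ, p} : Set V)).ncard + I'.ncard = I.ncard :=
            Set.ncard_inter_add_ncard_diff_eq_ncard I _ (Set.toFinite _)
          have hcap : (I ∩ ({ℓ, p} : Set V)).ncard ≤ 1 := by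
            by_cases hpI : p ∈ I
            · have hlI : ℓ ∉ I := fun hlI => hind hlI hpI hlp_ne hlp
              have hss : I ∩ ({ℓ, p} : Set V) ⊆ {p} := by
                rintro z ⟨hz, hz2⟩
                simp only [Set.mem_insert_iff, Set.mem_singleton_iff] at hz2
                rcases hz2 with rfl | rfl
                · exact absurd hz hlI
                · rfl
              calc (I ∩ ({ℓ, p} : Set V)).ncard ≤ ({p} : Set V).ncard :=
                    Set.ncard_le_ncard hss (Set.toFinite _)
                _ = 1 := Set.ncard_singleton p
            · have hss : I ∩ ({ℓ, p} : Set V) ⊆ {ℓ} := by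
                rintro z ⟨hz, hz2⟩
                simp only [Set.mem_insert_iff, Set.mem_singleton_iff] at hz2
                rcases hz2 with rfl | rfl
                · rfl
                · exact absurd hz hpI
              calc (I ∩ ({ℓ, p} : Set V)).ncard ≤ ({ℓ} : Set V).ncard :=
                    Set.ncard_le_ncard hss (Set.toFinite _)
                _ = 1 := Set.ncard_singleton ℓ
          have hle_main : I.ncard ≤ {u | x u ≠ 0}.ncard := by omega
          refine ⟨hle_main, ?_⟩
          rintro ⟨u₀, hu₀I, hu₀x⟩
          by_contra hnlt
          have heq : I.ncard = {u | x u ≠ 0}.ncard := le_antisymm hle_main (not_lt.1 hnlt)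
          have h1 : I'.ncard = {u | x' u ≠ 0}.ncard := by omega
          have hnotlt : ¬ I'.ncard < {u | x' u ≠ 0}.ncard := by omega
          have hsubI' : I' ⊆ {u | x' u ≠ 0} := by
            intro z hz
            by_contra hz0
            exact hnotlt (hlt' ⟨z, hz, by simpa using hz0⟩)
          have hI'eq : I' = {u | x' u ≠ 0} :=
            Set.eq_of_subset_of_ncard_le hsubI' (le_of_eq h1.symm) (Set.toFinite _)
          have hu₀R : u₀ ∈ ({ℓ, p} : Set V) := by
            by_contra hR
            have hmem : u₀ ∈ I' := ⟨hu₀I, hR⟩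
            rw [hI'eq] at hmem
            have hu0l : u₀ ≠ ℓ := fun h => hR (by simp [h])
            simp only [Set.mem_setOf_eq] at hmem
            exact hmem (by simpa [hx'def, hu0l] using hu₀x)
          have hu₀p : u₀ = p := by
            simp only [Set.mem_insert_iff, Set.mem_singleton_iff] at hu₀R
            rcases hu₀R with rfl | h
            · exact absurd hu₀x hxl
            · exact h
          subst hu₀p
          have hqS' : q ∈ {u | x' u ≠ 0} := by simp [hx'def, hq_ne, hq_x]
          rw [← hI'eq] at hqS'
          have hqp : q ≠ u₀ := fun h => hq_x (h ▸ hu₀x)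
          exact hind hu₀I hqS'.1 hqp.symm hq_adj

theorem core_vertex_not_maxIndep {V : Type*} [Fintype V] (G : SimpleGraph V) (hT : G.IsTree)
    (I : Set V) (hI : _root_.IsIndepSet G I) (c : V) (hc : c ∈ core G) (hcI : c ∈ I) :
    ¬ IsMaxIndep G I := by
  rintro ⟨hIindep, hIcard⟩
  obtain ⟨v, hv, hvc⟩ : ∃ v ∈ nullSupp G, c ∈ G.neighborSet v := by
    simpa [core, Set.mem_iUnion] using hc
  obtain ⟨x, hxnull, hxv⟩ := hv
  have hadj_vc : G.Adj v c := hvc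
  have hac : G.IsAcyclic := hT.2
  obtain ⟨hSind, hImain⟩ := crux (G.edgeSet.ncard) G le_rfl hac x hxnull
  set S := {u | x u ≠ 0} with hS
  set NS := {u | ∃ w, G.Adj u w ∧ x w ≠ 0} with hNS
  set I₀ := I \ (S ∪ NS) with hI0
  set J := I₀ ∪ S with hJdef
  have hxc : x c = 0 := by
    rcases hSind v c hadj_vc with h | h
    · exact absurd h hxv
    · exact h
  have hcNS : c ∈ NS := ⟨v, hadj_vc.symm, hxv⟩
  have hJind : _root_.IsIndepSet G J := by
    intro a ha b hb hne hadj
    rcases ha with ha | ha <;> rcases hb with hb | hb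
    · exact hI ha.1 hb.1 hne hadj
    · exact ha.2 (Or.inr ⟨b, hadj, hb⟩)
    · exact hb.2 (Or.inr ⟨a, hadj.symm, ha⟩)
    · rcases hSind a b hadj with h | h
      · exact ha h
      · exact hb h
  set I₁ := I ∩ (S ∪ NS) with hI1
  have hI₁ind : _root_.IsIndepSet G I₁ := hI.mono Set.inter_subset_left
  have hI₁cov : ∀ u ∈ I₁, x u ≠ 0 ∨ ∃ w, G.Adj u w ∧ x w ≠ 0 := fun u hu => hu.2
  have hlt : I₁.ncard < S.ncard :=
    (hImain I₁ hI₁ind hI₁cov).2 ⟨c, ⟨hcI, Or.inr hcNS⟩, hxc⟩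
  have hsplit : I₁.ncard + I₀.ncard = I.ncard :=
    Set.ncard_inter_add_ncard_diff_eq_ncard I _ (Set.toFinite _)
  have hdisj : Disjoint I₀ S := by
    rw [Set.disjoint_left]
    intro z hz hzS
    exact hz.2 (Or.inl hzS)
  have hJcard : J.ncard = I₀.ncard + S.ncard :=
    Set.ncard_union_eq hdisj (Set.toFinite _) (Set.toFinite _)
  have hbdd : BddAbove {n | ∃ K : Set V, _root_.IsIndepSet G K ∧ K.ncard = n} := by
    refine ⟨Fintype.card V, ?_⟩
    rintro m ⟨K, _, rfl⟩
    calc K.ncard ≤ (Set.univ : Set V).ncard :=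
          Set.ncard_le_ncard (Set.subset_univ K) (Set.toFinite _)
      _ = Fintype.card V := by rw [Set.ncard_univ, Nat.card_eq_fintype_card]
  have hle : J.ncard ≤ _root_.indepNum G := le_csSup hbdd ⟨J, hJind, rfl⟩
  rw [← hIcard] at hle
  omega
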